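/- If N ⊆ Γ[t,u^{[•]}] is a subgroup stable under T, under D, under all U_d and under all E_d, then there exists a subgroup Γ' ⊆ Γ such that N consists exactly of the functions f : ℕ×ℕ → Γ (finitely supported) with f(m,n) ∈ Γ' for all (m,n). (The submodule lemma used in the proof of Proposition 3.8 (Heis-mod-prop)(i).) -/

import Mathlib

/-- On `Γ[t,u^{[•]}]` (finitely supported functions `ℕ×ℕ → Γ`, with `γ t^m u^{[n]}`
the function supported at `(m,n)` with value `γ`): `T(γ t^m u^{[n]}) = γ t^{m+1} u^{[n]}`. -/
noncomputable def Tmap {Γ : Type*} [AddCommGroup Γ] (f : (ℕ × ℕ) →₀ Γ) : (ℕ × ℕ) →₀ Γ :=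
  f.sum fun p γ => Finsupp.single (p.1 + 1, p.2) γ

/-- `U_d(γ t^m u^{[n]}) = C(n+d,d)·γ t^m u^{[n+d]}`. -/
noncomputable def Umap {Γ : Type*} [AddCommGroup Γ] (d : ℕ) (f : (ℕ × ℕ) →₀ Γ) : (ℕ × ℕ) →₀ Γ :=
  f.sum fun p γ => Finsupp.single (p.1, p.2 + d) ((p.2 + d).choose d • γ)

/-- `E_d(γ t^m u^{[n]}) = C(m,d)·γ t^{m−d} u^{[n]}` (zero when `d > m`, since then
`C(m,d) = 0`). -/
noncomputable def Emap {Γ : Type*} [AddCommGroup Γ] (d : ℕ) (f : (ℕ × ℕ) →₀ Γ) : (ℕ × ℕ) →₀ Γ :=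
  f.sum fun p γ => Finsupp.single (p.1 - d, p.2) (p.1.choose d • γ)

/-- `D(γ t^m u^{[n]}) = γ t^m u^{[n−1]}` (zero when `n = 0`). -/
noncomputable def Dmap {Γ : Type*} [AddCommGroup Γ] (f : (ℕ × ℕ) →₀ Γ) : (ℕ × ℕ) →₀ Γ :=
  f.sum fun p γ => if 1 ≤ p.2 then Finsupp.single (p.1, p.2 - 1) γ else 0

section Aux
variable {Γ : Type*} [AddCommGroup Γ]

lemma Tmap_single (m n : ℕ) (γ : Γ) :
    Tmap (Finsupp.single (m, n) γ) = Finsupp.single (m + 1, n) γ := by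
  unfold Tmap; rw [Finsupp.sum_single_index (by simp)]

lemma Umap_single (d m n : ℕ) (γ : Γ) :
    Umap d (Finsupp.single (m, n) γ) = Finsupp.single (m, n + d) ((n + d).choose d • γ) := by
  unfold Umap; rw [Finsupp.sum_single_index (by simp)]

lemma Emap_single (d m n : ℕ) (γ : Γ) :
    Emap d (Finsupp.single (m, n) γ) = Finsupp.single (m - d, n) (m.choose d • γ) := by
  unfold Emap; rw [Finsupp.sum_single_index (by simp)]

lemma Dmap_single (m n : ℕ) (γ : Γ) :
    Dmap (Finsupp.single (m, n) γ) =
      if 1 ≤ n then Finsupp.single (m, n - 1) γ else 0 := by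
  unfold Dmap; rw [Finsupp.sum_single_index (by split <;> simp)]

lemma Tmap_add (f g : (ℕ × ℕ) →₀ Γ) : Tmap (f + g) = Tmap f + Tmap g :=
  Finsupp.sum_add_index' (by simp) (by simp [Finsupp.single_add])

lemma Umap_add (d : ℕ) (f g : (ℕ × ℕ) →₀ Γ) : Umap d (f + g) = Umap d f + Umap d g :=
  Finsupp.sum_add_index' (by simp) (by simp [smul_add, Finsupp.single_add])

lemma Emap_add (d : ℕ) (f g : (ℕ × ℕ) →₀ Γ) : Emap d (f + g) = Emap d f + Emap d g :=
  Finsupp.sum_add_index' (by simp) (by simp [smul_add, Finsupp.single_add])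

lemma Dmap_add (f g : (ℕ × ℕ) →₀ Γ) : Dmap (f + g) = Dmap f + Dmap g :=
  Finsupp.sum_add_index' (by intro a; split <;> simp)
    (by intro a b₁ b₂; split <;> simp [Finsupp.single_add])

lemma Dmap_iter_add (K : ℕ) (f g : (ℕ × ℕ) →₀ Γ) :
    Dmap^[K] (f + g) = Dmap^[K] f + Dmap^[K] g := by
  induction K generalizing f g with
  | zero => simp
  | succ K ih => simp [Function.iterate_succ_apply, Dmap_add, ih]

lemma Tmap_iter_add (K : ℕ) (f g : (ℕ × ℕ) →₀ Γ) :
    Tmap^[K] (f + g) = Tmap^[K] f + Tmap^[K] g := by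
  induction K generalizing f g with
  | zero => simp
  | succ K ih => simp [Function.iterate_succ_apply, Tmap_add, ih]

lemma Dmap_zero : Dmap (0 : (ℕ × ℕ) →₀ Γ) = 0 := Finsupp.sum_zero_index

lemma Dmap_iter_zero (K : ℕ) : Dmap^[K] (0 : (ℕ × ℕ) →₀ Γ) = 0 := by
  induction K with
  | zero => simp
  | succ K ih => simp [Function.iterate_succ_apply, Dmap_zero, ih]

lemma Dmap_iter_single (K m n : ℕ) (γ : Γ) :
    Dmap^[K] (Finsupp.single (m, n) γ) =
      if K ≤ n then Finsupp.single (m, n - K) γ else 0 := by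
  induction K generalizing n with
  | zero => simp
  | succ K ih =>
    rw [Function.iterate_succ_apply, Dmap_single]
    rcases Nat.eq_zero_or_pos n with rfl | hn
    · simp [Dmap_iter_zero]
    · rw [if_pos (show 1 ≤ n by omega), ih]
      have h1 : K ≤ n - 1 ↔ K + 1 ≤ n := by omega
      have h2 : n - 1 - K = n - (K + 1) := by omega
      simp [h1, h2]

lemma Tmap_iter_single (K m n : ℕ) (γ : Γ) :
    Tmap^[K] (Finsupp.single (m, n) γ) = Finsupp.single (m + K, n) γ := by
  induction K generalizing m with
  | zero => simp
  | succ K ih =>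
    rw [Function.iterate_succ_apply, Tmap_single, ih]
    congr 2
    omega

lemma Dmap_iter_sum (K : ℕ) (s : Finset (ℕ × ℕ)) (F : ℕ × ℕ → (ℕ × ℕ) →₀ Γ) :
    Dmap^[K] (∑ p ∈ s, F p) = ∑ p ∈ s, Dmap^[K] (F p) :=
  map_sum (AddMonoidHom.mk' _ (fun a b => Dmap_iter_add K a b)) _ _

lemma Tmap_iter_sum (K : ℕ) (s : Finset (ℕ × ℕ)) (F : ℕ × ℕ → (ℕ × ℕ) →₀ Γ) :
    Tmap^[K] (∑ p ∈ s, F p) = ∑ p ∈ s, Tmap^[K] (F p) :=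
  map_sum (AddMonoidHom.mk' _ (fun a b => Tmap_iter_add K a b)) _ _

end Aux

section Main
variable {Γ : Type*} [AddCommGroup Γ] (N : AddSubgroup ((ℕ × ℕ) →₀ Γ))

lemma Dmap_iter_mem (hD : ∀ f ∈ N, Dmap f ∈ N) (K : ℕ) :
    ∀ f ∈ N, Dmap^[K] f ∈ N := by
  induction K with
  | zero => intro f hf; simpa using hf
  | succ K ih => intro f hf; rw [Function.iterate_succ_apply]; exact ih _ (hD f hf)

lemma Tmap_iter_mem (hT : ∀ f ∈ N, Tmap f ∈ N) (K : ℕ) :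
    ∀ f ∈ N, Tmap^[K] f ∈ N := by
  induction K with
  | zero => intro f hf; simpa using hf
  | succ K ih => intro f hf; rw [Function.iterate_succ_apply]; exact ih _ (hT f hf)

lemma lemB (hD : ∀ f ∈ N, Dmap f ∈ N) (hU : ∀ d : ℕ, ∀ f ∈ N, Umap d f ∈ N) :
    ∀ K : ℕ, ∀ g ∈ N, (∀ p ∈ g.support, p.1 = 0 ∧ p.2 ≤ K) →
      ∀ n : ℕ, Finsupp.single ((0 : ℕ), (0 : ℕ)) (g (0, n)) ∈ N := by
  intro K
  induction K with
  | zero =>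
    intro g hg hsupp n
    have hgeq : g = Finsupp.single ((0 : ℕ), (0 : ℕ)) (g (0, 0)) := by
      ext p
      rcases eq_or_ne p (0, 0) with rfl | hp
      · simp
      · rw [Finsupp.single_eq_of_ne' (Ne.symm hp)]
        by_contra h
        have := hsupp p (Finsupp.mem_support_iff.2 h)
        exact hp (Prod.ext this.1 (Nat.le_zero.1 this.2))
    rcases Nat.eq_zero_or_pos n with rfl | hn
    · exact hgeq ▸ hg
    · have h0 : g (0, n) = 0 := by
        by_contra h
        have := hsupp _ (Finsupp.mem_support_iff.2 h)
        omega
      rw [h0, Finsupp.single_zero]; exact N.zero_mem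
  | succ K ih =>
    intro g hg hsupp n
    have htopmem : Dmap^[K + 1] g ∈ N := Dmap_iter_mem N hD _ g hg
    have htop : Dmap^[K + 1] g = Finsupp.single ((0 : ℕ), (0 : ℕ)) (g (0, K + 1)) := by
      conv_lhs => rw [← Finsupp.sum_single g, Finsupp.sum, Dmap_iter_sum]
      rw [Finset.sum_eq_single ((0 : ℕ), K + 1)]
      · rw [Dmap_iter_single, if_pos le_rfl]
        simp
      · intro p hp hne
        obtain ⟨h1, h2⟩ := hsupp p hp
        rw [Dmap_iter_single,
          if_neg (fun hle => hne (Prod.ext h1 (le_antisymm h2 hle)))]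
      · intro hnm
        have : g (0, K + 1) = 0 := Finsupp.notMem_support_iff.1 hnm
        rw [this, Finsupp.single_zero]
        exact Dmap_iter_zero _
    have htopN : Finsupp.single ((0 : ℕ), (0 : ℕ)) (g (0, K + 1)) ∈ N := htop ▸ htopmem
    rcases eq_or_ne n (K + 1) with rfl | hn
    · exact htopN
    · have hUeq : Umap (K + 1) (Finsupp.single ((0 : ℕ), (0 : ℕ)) (g (0, K + 1))) =
          Finsupp.single ((0 : ℕ), K + 1) (g (0, K + 1)) := by
        rw [Umap_single, zero_add, Nat.choose_self, one_smul]
      have hg' : g - Finsupp.single ((0 : ℕ), K + 1) (g (0, K + 1)) ∈ N :=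
        N.sub_mem hg (hUeq ▸ hU (K + 1) _ htopN)
      have hsupp' : ∀ p ∈ (g - Finsupp.single ((0 : ℕ), K + 1) (g (0, K + 1))).support,
          p.1 = 0 ∧ p.2 ≤ K := by
        intro p hp
        have hpne := Finsupp.mem_support_iff.1 hp
        rw [Finsupp.sub_apply] at hpne
        rcases eq_or_ne p (0, K + 1) with rfl | hne
        · simp at hpne
        · rw [Finsupp.single_eq_of_ne' (Ne.symm hne), sub_zero] at hpne
          obtain ⟨h1, h2⟩ := hsupp p (Finsupp.mem_support_iff.2 hpne)
          refine ⟨h1, ?_⟩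
          rcases Nat.lt_succ_iff_lt_or_eq.1 (Nat.lt_succ_of_le h2) with h | h
          · omega
          · exact absurd (Prod.ext h1 h) hne
      have := ih _ hg' hsupp' n
      rwa [Finsupp.sub_apply, Finsupp.single_eq_of_ne' (by simp [Ne.symm hn]), sub_zero] at this

end Main

section Main2
variable {Γ : Type*} [AddCommGroup Γ] (N : AddSubgroup ((ℕ × ℕ) →₀ Γ))

lemma lemB' (hD : ∀ f ∈ N, Dmap f ∈ N) (hU : ∀ d : ℕ, ∀ f ∈ N, Umap d f ∈ N)
    (g : (ℕ × ℕ) →₀ Γ) (hg : g ∈ N) (hconc : ∀ p ∈ g.support, p.1 = 0) (n : ℕ) :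
    Finsupp.single ((0 : ℕ), (0 : ℕ)) (g (0, n)) ∈ N := by
  refine lemB N hD hU (g.support.sup Prod.snd) g hg (fun p hp => ⟨hconc p hp, ?_⟩) n
  exact Finset.le_sup (f := Prod.snd) hp

lemma lemA (hT : ∀ f ∈ N, Tmap f ∈ N) (hD : ∀ f ∈ N, Dmap f ∈ N)
    (hU : ∀ d : ℕ, ∀ f ∈ N, Umap d f ∈ N) (hE : ∀ d : ℕ, ∀ f ∈ N, Emap d f ∈ N) :
    ∀ M : ℕ, ∀ f ∈ N, (∀ p ∈ f.support, p.1 ≤ M) →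
      ∀ p : ℕ × ℕ, Finsupp.single ((0 : ℕ), (0 : ℕ)) (f p) ∈ N := by
  intro M
  induction M with
  | zero =>
    intro f hf hsupp p
    have hconc : ∀ q ∈ f.support, q.1 = 0 := fun q hq => Nat.le_zero.1 (hsupp q hq)
    rcases eq_or_ne p.1 0 with h1 | h1
    · have : p = (0, p.2) := Prod.ext h1 rfl
      rw [this]
      exact lemB' N hD hU f hf hconc p.2
    · have : f p = 0 := by
        by_contra h
        exact h1 (hconc p (Finsupp.mem_support_iff.2 h))
      rw [this, Finsupp.single_zero]; exact N.zero_mem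
  | succ M ih =>
    intro f hf hsupp p
    set h := Emap (M + 1) f with hh
    have hmem : h ∈ N := hE (M + 1) f hf
    have hdef : h = ∑ q ∈ f.support,
        Finsupp.single (q.1 - (M + 1), q.2) (q.1.choose (M + 1) • f q) := rfl
    have hconc : ∀ q ∈ h.support, q.1 = 0 := by
      intro q hq
      by_contra hq1
      apply Finsupp.mem_support_iff.1 hq
      rw [hdef, Finsupp.finset_sum_apply]
      refine Finset.sum_eq_zero fun r hr => ?_
      refine Finsupp.single_eq_of_ne' ?_
      have : r.1 ≤ M + 1 := hsupp r hr
      intro he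
      apply hq1
      rw [← he]
      simp
      omega
    have hval : ∀ b : ℕ, h (0, b) = f (M + 1, b) := by
      intro b
      rw [hdef, Finsupp.finset_sum_apply]
      rw [Finset.sum_eq_single ((M + 1 : ℕ), b)]
      · simp [Nat.choose_self]
      · intro r hr hne
        rcases eq_or_ne r.2 b with h2 | h2
        · have hlt : r.1 < M + 1 := by
            have := hsupp r hr
            rcases Nat.lt_or_ge r.1 (M + 1) with h | h
            · exact h
            · exact absurd (Prod.ext (le_antisymm this h) h2) hne
          rw [Nat.choose_eq_zero_of_lt hlt, zero_smul, Finsupp.single_zero]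
          rfl
        · exact Finsupp.single_eq_of_ne' (by simp [h2])
      · intro hnm
        have : f (M + 1, b) = 0 := Finsupp.notMem_support_iff.1 hnm
        simp [this]
    have hrow : ∀ b : ℕ, Finsupp.single ((0 : ℕ), (0 : ℕ)) (f (M + 1, b)) ∈ N := by
      intro b
      have := lemB' N hD hU h hmem hconc b
      rwa [hval b] at this
    -- second part: subtract the top row
    have h2mem : Tmap^[M + 1] h ∈ N := Tmap_iter_mem N hT _ h hmem
    have h2val : ∀ q : ℕ × ℕ, (Tmap^[M + 1] h) q =
        if q.1 = M + 1 then h (0, q.2) else 0 := by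
      intro q
      conv_lhs => rw [← Finsupp.sum_single h, Finsupp.sum, Tmap_iter_sum]
      rw [Finsupp.finset_sum_apply]
      rcases eq_or_ne q.1 (M + 1) with h1 | h1
      · rw [if_pos h1]
        rw [Finset.sum_eq_single ((0 : ℕ), q.2)]
        · rw [Tmap_iter_single, zero_add]
          have : ((M + 1 : ℕ), q.2) = q := Prod.ext h1.symm rfl
          rw [this, Finsupp.single_eq_same]
        · intro r hr hne
          rw [Tmap_iter_single]
          refine Finsupp.single_eq_of_ne' ?_
          have hr1 : r.1 = 0 := hconc r hr
          intro he
          apply hne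
          have : r.2 = q.2 := by rw [← he]
          exact Prod.ext hr1 this
        · intro hnm
          rw [Tmap_iter_single, Finsupp.notMem_support_iff.1 hnm, Finsupp.single_zero]
          rfl
      · rw [if_neg h1]
        refine Finset.sum_eq_zero fun r hr => ?_
        rw [Tmap_iter_single]
        refine Finsupp.single_eq_of_ne' ?_
        have hr1 : r.1 = 0 := hconc r hr
        intro he
        apply h1
        rw [← he, hr1, zero_add]
    have hg' : f - Tmap^[M + 1] h ∈ N := N.sub_mem hf h2mem
    have hsupp' : ∀ q ∈ (f - Tmap^[M + 1] h).support, q.1 ≤ M := by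
      intro q hq
      have hqne := Finsupp.mem_support_iff.1 hq
      rw [Finsupp.sub_apply, h2val] at hqne
      rcases eq_or_ne q.1 (M + 1) with h1 | h1
      · exfalso
        apply hqne
        rw [if_pos h1, hval]
        have : ((M + 1 : ℕ), q.2) = q := Prod.ext h1.symm rfl
        rw [this, sub_self]
      · rw [if_neg h1, sub_zero] at hqne
        have := hsupp q (Finsupp.mem_support_iff.2 hqne)
        omega
    have hall := ih _ hg' hsupp' p
    rcases eq_or_ne p.1 (M + 1) with h1 | h1
    · have : p = ((M + 1 : ℕ), p.2) := Prod.ext h1 rfl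
      rw [this]
      exact hrow p.2
    · rwa [Finsupp.sub_apply, h2val, if_neg h1, sub_zero] at hall
end Main2

/-- The submodule lemma used in the proof of Proposition 3.8 (Heis-mod-prop)(i):
a subgroup of `Γ[t,u^{[•]}]` stable under `T`, `D`, all `U_d` and all `E_d` has the
form `Γ'[t,u^{[•]}]` for a subgroup `Γ' ⊆ Γ`. -/
theorem stmt12 {Γ : Type*} [AddCommGroup Γ] (N : AddSubgroup ((ℕ × ℕ) →₀ Γ))
    (hT : ∀ f ∈ N, Tmap f ∈ N) (hD : ∀ f ∈ N, Dmap f ∈ N)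
    (hU : ∀ d : ℕ, ∀ f ∈ N, Umap d f ∈ N) (hE : ∀ d : ℕ, ∀ f ∈ N, Emap d f ∈ N) :
    ∃ Γ' : AddSubgroup Γ, ∀ f : (ℕ × ℕ) →₀ Γ, f ∈ N ↔ ∀ p : ℕ × ℕ, f p ∈ Γ' := by
  refine ⟨{ carrier := {γ | Finsupp.single ((0 : ℕ), (0 : ℕ)) γ ∈ N}
            add_mem' := ?_
            zero_mem' := ?_
            neg_mem' := ?_ }, ?_⟩
  · intro a b ha hb
    simpa [Finsupp.single_add] using N.add_mem ha hb
  · simpa using N.zero_mem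
  · intro a ha
    simpa [Finsupp.single_neg] using N.neg_mem ha
  · intro f
    constructor
    · intro hf p
      exact lemA N hT hD hU hE (f.support.sup Prod.fst) f hf
        (fun q hq => Finset.le_sup (f := Prod.fst) hq) p
    · intro hmem
      rw [← Finsupp.sum_single f, Finsupp.sum]
      refine sum_mem fun p hp => ?_
      have h0 : Finsupp.single ((0 : ℕ), (0 : ℕ)) (f p) ∈ N := hmem p
      have h1 : Finsupp.single ((p.1 : ℕ), (0 : ℕ)) (f p) ∈ N := by
        have := Tmap_iter_mem N hT p.1 _ h0
        rwa [Tmap_iter_single, zero_add] at this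
      have h2 := hU p.2 _ h1
      rw [Umap_single, zero_add, Nat.choose_self, one_smul] at h2
      simpa using h2
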